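/- Let ϖ_X, ϖ_C, γ be real numbers with γ ≠ 0, ϖ_C < 0, and ϖ_X·ϖ_C ≤ γ². Set ζ = ϖ_X − γ²/ϖ_C and α = 2ζ − ϖ_X. Then for every real k, every complex root s of the far-field dispersion quartic D(k,s) = 0 is purely imaginary (its real part is zero). Hence the far fields of the solitons in bands 1.1 and 3.2 are linearly stable at every mode k. -/

import Mathlib

lemma re_eq_zero_of_sq_real_nonpos (s : ℂ) (r : ℝ) (hr : r ≤ 0) (hx : s ^ 2 = (r : ℂ)) :
    s.re = 0 := by
  rw [pow_two, Complex.ext_iff] at hx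
  simp only [Complex.mul_re, Complex.mul_im, Complex.ofReal_re, Complex.ofReal_im] at hx
  obtain ⟨h1, h2⟩ := hx
  have hab : s.re * s.im = 0 := by linarith
  rcases mul_eq_zero.mp hab with h | h
  · exact h
  · have hsq : s.re ^ 2 = 0 := by nlinarith [sq_nonneg s.re]
    exact (pow_eq_zero_iff two_ne_zero).mp hsq

lemma quartic_roots_imaginary (b c : ℝ) (hb : 0 ≤ b) (hc : 0 ≤ c) (hd : 4 * c ≤ b ^ 2)
    (s : ℂ) (h : s ^ 4 + (b : ℂ) * s ^ 2 + (c : ℂ) = 0) : s.re = 0 := by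
  set d := Real.sqrt (b ^ 2 - 4 * c) with hdd
  have hd0 : 0 ≤ d := Real.sqrt_nonneg _
  have hdsq : d ^ 2 = b ^ 2 - 4 * c := Real.sq_sqrt (by linarith)
  have hdb : d ≤ b := by nlinarith
  have hdsqC : (d : ℂ) ^ 2 = (b : ℂ) ^ 2 - 4 * (c : ℂ) := by exact_mod_cast congrArg (fun x : ℝ => (x : ℂ)) hdsq
  have key : (s ^ 2 - ((d - b) / 2 : ℝ)) * (s ^ 2 - ((-d - b) / 2 : ℝ)) = 0 := by
    push_cast
    linear_combination h - (1 / 4) * hdsqC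
  rcases mul_eq_zero.mp key with hk | hk
  · exact re_eq_zero_of_sq_real_nonpos s ((d - b) / 2) (by linarith) (sub_eq_zero.mp hk)
  · exact re_eq_zero_of_sq_real_nonpos s ((-d - b) / 2) (by linarith) (sub_eq_zero.mp hk)

/-- Stability of the far fields of bands 1.1 and 3.2: for `ϖC < 0` and `ϖX·ϖC ≤ γ²`
(i.e. `η ≤ 1`), every complex root of the far-field dispersion quartic at
`ζ = ϖX − γ²/ϖC`, `α = 2ζ − ϖX`, is purely imaginary. -/
theorem far_field_stable_bands_1_1_and_3_2
    (ϖX ϖC γ : ℝ) (hγ : γ ≠ 0) (hϖC : ϖC < 0) (hη : ϖX * ϖC ≤ γ ^ 2) :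
    ∀ k : ℝ, ∀ s : ℂ,
      s ^ 4
        + ((((2 * (ϖX - γ ^ 2 / ϖC) - ϖX) ^ 2 + (k ^ 2 - ϖC) ^ 2 + 2 * γ ^ 2
            - (ϖX - γ ^ 2 / ϖC) ^ 2 : ℝ)) : ℂ) * s ^ 2
        + (((γ ^ 4 - 2 * (2 * (ϖX - γ ^ 2 / ϖC) - ϖX) * (k ^ 2 - ϖC) * γ ^ 2
            + ((2 * (ϖX - γ ^ 2 / ϖC) - ϖX) ^ 2 - (ϖX - γ ^ 2 / ϖC) ^ 2)
              * (k ^ 2 - ϖC) ^ 2 : ℝ)) : ℂ) = 0 →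
      s.re = 0 := by
  intro k s h
  set u : ℝ := γ ^ 2 / ϖC with hu_def
  have hϖC' : ϖC ≠ 0 := ne_of_lt hϖC
  have hγ2 : (0 : ℝ) < γ ^ 2 := by positivity
  have hug : γ ^ 2 = u * ϖC := by rw [hu_def, div_mul_cancel₀ _ hϖC']
  have huneg : u < 0 := div_neg_of_pos_of_neg hγ2 hϖC
  have huw : u ≤ ϖX := (div_le_iff_of_neg hϖC).mpr hη
  have hk2 : (0 : ℝ) ≤ k ^ 2 := sq_nonneg k
  -- coefficients
  have hb : (0 : ℝ) ≤ (2 * (ϖX - u) - ϖX) ^ 2 + (k ^ 2 - ϖC) ^ 2 + 2 * γ ^ 2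
      - (ϖX - u) ^ 2 := by
    nlinarith [mul_nonneg (neg_nonneg.mpr huneg.le) (sub_nonneg.mpr huw),
      sq_nonneg (k ^ 2 - ϖC), mul_pos_of_neg_of_neg huneg hϖC]
  have hF1 : (0 : ℝ) ≤ (2 * ϖX - 3 * u) * (k ^ 2 - ϖC) - u * ϖC := by
    nlinarith [mul_nonneg (by linarith : (0:ℝ) ≤ 2 * (ϖX - u)) (by linarith : (0:ℝ) ≤ k ^ 2 - ϖC),
      mul_nonneg (neg_nonneg.mpr huneg.le) hk2]
  have hF2 : (0 : ℝ) ≤ -(u * k ^ 2) := by nlinarith [mul_nonneg (neg_nonneg.mpr huneg.le) hk2]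
  have hc : (0 : ℝ) ≤ γ ^ 4 - 2 * (2 * (ϖX - u) - ϖX) * (k ^ 2 - ϖC) * γ ^ 2
      + ((2 * (ϖX - u) - ϖX) ^ 2 - (ϖX - u) ^ 2) * (k ^ 2 - ϖC) ^ 2 := by
    nlinarith [mul_nonneg hF1 hF2, hug]
  have hd : 4 * (γ ^ 4 - 2 * (2 * (ϖX - u) - ϖX) * (k ^ 2 - ϖC) * γ ^ 2
      + ((2 * (ϖX - u) - ϖX) ^ 2 - (ϖX - u) ^ 2) * (k ^ 2 - ϖC) ^ 2)
      ≤ ((2 * (ϖX - u) - ϖX) ^ 2 + (k ^ 2 - ϖC) ^ 2 + 2 * γ ^ 2 - (ϖX - u) ^ 2) ^ 2 := by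
    nlinarith [sq_nonneg ((-u) * (2 * ϖX - 3 * u) - (k ^ 2 - ϖC) ^ 2),
      mul_nonneg (mul_nonneg hγ2.le (by linarith : (0:ℝ) ≤ (k ^ 2 - ϖC) - u))
        (by linarith : (0:ℝ) ≤ 2 * ϖX - 3 * u + (k ^ 2 - ϖC)), hug]
  exact quartic_roots_imaginary _ _ hb hc hd s h
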